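/- Let S be a finite set of points in the plane and let p be a point. Suppose L₁ consists of the c points of NNE(p) ∩ S with lowest y-coordinate (or all such points if fewer than c) and L₂ consists of the c points of ENE(p) ∩ S with smallest x-coordinate (or all such points if fewer than c). If |NE(p) ∩ S| ≥ c, then the smallest axis-parallel square with bottom-left corner p containing at least c points of S has side length equal to the c-th smallest value in the multiset {d_∞(p,q) : q ∈ L₁ ∪ L₂}, where d_∞(p,q) = max(|p_x − q_x|, |p_y − q_y|). -/
import Mathlib

noncomputable def dinf (p q : ℝ × ℝ) : ℝ := max |p.1 - q.1| |p.2 - q.2|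

def NEpred (p q : ℝ × ℝ) : Prop := p.1 ≤ q.1 ∧ p.2 ≤ q.2

def NNEpred (p q : ℝ × ℝ) : Prop := NEpred p q ∧ q.1 - p.1 ≤ q.2 - p.2

def ENEpred (p q : ℝ × ℝ) : Prop := NEpred p q ∧ q.2 - p.2 ≤ q.1 - p.1

def square (p : ℝ × ℝ) (s : ℝ) : Set (ℝ × ℝ) :=
  {q | p.1 ≤ q.1 ∧ q.1 ≤ p.1 + s ∧ p.2 ≤ q.2 ∧ q.2 ≤ p.2 + s}

open Finset



/-- Rank counting lemma: if keys are injective on `N` and `c ≤ |N|`, then at least `c`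
elements of `N` have rank `< c`. -/
lemma rank_count {α : Type*} [DecidableEq α] (N : Finset α) (k : α → ℝ)
    (hk : ∀ a ∈ N, ∀ b ∈ N, a ≠ b → k a ≠ k b) (c : ℕ) (hc : c ≤ N.card) :
    c ≤ (N.filter (fun q => (N.filter (fun r => k r < k q)).card < c)).card := by
  classical
  set rank : α → ℕ := fun q => (N.filter (fun r => k r < k q)).card with hrank
  have hmono : ∀ a ∈ N, ∀ b ∈ N, k a < k b → rank a < rank b := by
    intro a ha b hb h
    apply card_lt_card
    constructor
    · intro x hx
      simp only [mem_filter] at hx ⊢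
      exact ⟨hx.1, hx.2.trans h⟩
    · intro hsub
      have := hsub (by simp only [mem_filter]; exact ⟨ha, h⟩)
      simp only [mem_filter, lt_self_iff_false, and_false] at this
  have hinj : Set.InjOn rank N := by
    intro a ha b hb hab
    by_contra hne
    rcases lt_or_gt_of_ne (hk a ha b hb hne) with h | h
    · exact absurd hab (Nat.ne_of_lt (hmono a ha b hb h))
    · exact absurd hab.symm (Nat.ne_of_lt (hmono b hb a ha h))
  have hlt : ∀ q ∈ N, rank q < N.card := by
    intro q hq
    apply card_lt_card
    constructor
    · exact filter_subset _ _
    · intro hsub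
      have := hsub hq
      simp only [mem_filter, lt_self_iff_false, and_false] at this
  have himg : N.image rank = Finset.range N.card := by
    apply eq_of_subset_of_card_le
    · intro x hx
      obtain ⟨q, hq, rfl⟩ := mem_image.mp hx
      exact mem_range.mpr (hlt q hq)
    · rw [card_range, card_image_of_injOn hinj]
  have hfilt : (N.filter (fun q => rank q < c)).image rank
      = (N.image rank).filter (fun x => x < c) := (filter_image (p := fun x => x < c) (f := rank) (s := N)).symm
  have hcardeq : (N.filter (fun q => rank q < c)).card
      = ((N.image rank).filter (fun x => x < c)).card := by
    rw [← hfilt, card_image_of_injOn (hinj.mono (by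
      intro x hx; exact mem_filter.mp hx |>.1))]
  rw [hcardeq, himg]
  have : (Finset.range N.card).filter (fun x => x < c) = Finset.range (min N.card c) := by
    ext x; simp only [mem_filter, mem_range]; omega
  rw [this, card_range]
  omega

/-- If `q ∈ N` but not among the (at most) `c` smallest-key elements `L`, then `|L| ≥ c`
and every element of `L` has key strictly below `k q`. -/
lemma cone_case {α : Type*} [DecidableEq α] (N : Finset α) (k : α → ℝ)
    (hk : ∀ a ∈ N, ∀ b ∈ N, a ≠ b → k a ≠ k b)
    (c : ℕ) (L : Finset α)
    (hL : L = N.filter (fun q => (N.filter (fun r => k r < k q)).card < c))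
    (q : α) (hq : q ∈ N) (hqL : q ∉ L) :
    c ≤ L.card ∧ ∀ r ∈ L, k r < k q := by
  classical
  have hcount : c ≤ (N.filter (fun r => k r < k q)).card := by
    by_contra h
    exact hqL (hL ▸ mem_filter.mpr ⟨hq, by omega⟩)
  have hNc : c ≤ N.card := hcount.trans (card_le_card (filter_subset _ _))
  refine ⟨hL ▸ rank_count N k hk c hNc, ?_⟩
  intro r hr
  rw [hL] at hr
  obtain ⟨hrN, hrc⟩ := mem_filter.mp hr
  have hrq : r ≠ q := fun h => hqL (h ▸ hL ▸ hr)
  rcases lt_or_gt_of_ne (hk r hrN q hq hrq) with h | h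
  · exact h
  · exfalso
    have hsub : insert q (N.filter (fun x => k x < k q)) ⊆ N.filter (fun x => k x < k r) := by
      intro x hx
      rcases mem_insert.mp hx with rfl | hx
      · exact mem_filter.mpr ⟨hq, h⟩
      · obtain ⟨hxN, hxk⟩ := mem_filter.mp hx
        exact mem_filter.mpr ⟨hxN, hxk.trans h⟩
    have : c + 1 ≤ (N.filter (fun x => k x < k r)).card := by
      calc c + 1 ≤ (N.filter (fun x => k x < k q)).card + 1 := by omega
        _ = (insert q (N.filter (fun x => k x < k q))).card := by
            rw [card_insert_of_notMem (by simp)]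
        _ ≤ _ := card_le_card hsub
    omega


lemma dinf_nonneg (p q : ℝ × ℝ) : 0 ≤ dinf p q :=
  le_trans (abs_nonneg _) (le_max_left _ _)

lemma dinf_of_NNE {p q : ℝ × ℝ} (h : NNEpred p q) : dinf p q = q.2 - p.2 := by
  obtain ⟨⟨h1, h2⟩, h3⟩ := h
  unfold dinf
  rw [abs_sub_comm p.1 q.1, abs_sub_comm p.2 q.2,
    abs_of_nonneg (by linarith), abs_of_nonneg (by linarith)]
  exact max_eq_right h3

lemma dinf_of_ENE {p q : ℝ × ℝ} (h : ENEpred p q) : dinf p q = q.1 - p.1 := by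
  obtain ⟨⟨h1, h2⟩, h3⟩ := h
  unfold dinf
  rw [abs_sub_comm p.1 q.1, abs_sub_comm p.2 q.2,
    abs_of_nonneg (by linarith), abs_of_nonneg (by linarith)]
  exact max_eq_left h3

lemma mem_square_iff {p q : ℝ × ℝ} {s : ℝ} :
    q ∈ square p s ↔ NEpred p q ∧ dinf p q ≤ s := by
  constructor
  · rintro ⟨h1, h2, h3, h4⟩
    refine ⟨⟨h1, h3⟩, ?_⟩
    unfold dinf
    rw [abs_sub_comm p.1 q.1, abs_sub_comm p.2 q.2,
      abs_of_nonneg (by linarith), abs_of_nonneg (by linarith)]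
    exact max_le (by linarith) (by linarith)
  · rintro ⟨⟨h1, h2⟩, hd⟩
    unfold dinf at hd
    rw [abs_sub_comm p.1 q.1, abs_sub_comm p.2 q.2,
      abs_of_nonneg (by linarith), abs_of_nonneg (by linarith)] at hd
    have := max_le_iff.mp hd
    exact ⟨h1, by linarith [this.1], h2, by linarith [this.2]⟩

open Classical in
theorem smallest_square_from_cones
    (S : Finset (ℝ × ℝ)) (c : ℕ) (hc : 1 ≤ c) (p : ℝ × ℝ)
    (hgenx : ∀ q ∈ S, ∀ r ∈ S, q ≠ r → q.1 ≠ r.1)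
    (hgeny : ∀ q ∈ S, ∀ r ∈ S, q ≠ r → q.2 ≠ r.2)
    (hgeninf : ∀ q ∈ S, ∀ r ∈ S, q ≠ r → dinf p q ≠ dinf p r)
    (hcard : c ≤ (S.filter (NEpred p)).card)
    (L₁ L₂ : Finset (ℝ × ℝ))
    -- L₁: the (at most) c points of NNE(p) ∩ S with lowest y-coordinate
    (hL₁ : L₁ = (S.filter (NNEpred p)).filter
      (fun q => ((S.filter (NNEpred p)).filter (fun r => r.2 < q.2)).card < c))
    -- L₂: the (at most) c points of ENE(p) ∩ S with smallest x-coordinate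
    (hL₂ : L₂ = (S.filter (ENEpred p)).filter
      (fun q => ((S.filter (ENEpred p)).filter (fun r => r.1 < q.1)).card < c))
    (v : ℝ)
    -- v is the c-th smallest value in {d∞(p,q) : q ∈ L₁ ∪ L₂}
    (hv : v ∈ (L₁ ∪ L₂).image (dinf p))
    (hvc : ((L₁ ∪ L₂).filter (fun q => dinf p q ≤ v)).card = c) :
    IsLeast {s : ℝ | 0 ≤ s ∧ c ≤ (S.filter (fun q => q ∈ square p s)).card} v := by
  classical
  obtain ⟨q₀, hq₀mem, hq₀v⟩ := Finset.mem_image.mp hv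
  -- L₁ ∪ L₂ consists of NE points of S
  have hLsub : ∀ r ∈ L₁ ∪ L₂, r ∈ S ∧ NEpred p r := by
    intro r hr
    rcases Finset.mem_union.mp hr with h | h
    · rw [hL₁] at h
      obtain ⟨h1, _⟩ := mem_filter.mp h
      obtain ⟨h1, h2⟩ := mem_filter.mp h1
      exact ⟨h1, h2.1⟩
    · rw [hL₂] at h
      obtain ⟨h1, _⟩ := mem_filter.mp h
      obtain ⟨h1, h2⟩ := mem_filter.mp h1
      exact ⟨h1, h2.1⟩
  -- the set B of c points realizing v
  set B := (L₁ ∪ L₂).filter (fun q => dinf p q ≤ v) with hB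
  have hq₀B : q₀ ∈ B := mem_filter.mpr ⟨hq₀mem, le_of_eq hq₀v⟩
  constructor
  · refine ⟨hq₀v ▸ dinf_nonneg p q₀, ?_⟩
    rw [← hvc]
    apply card_le_card
    intro r hr
    obtain ⟨hr1, hr2⟩ := mem_filter.mp hr
    obtain ⟨hrS, hrNE⟩ := hLsub r hr1
    exact mem_filter.mpr ⟨hrS, mem_square_iff.mpr ⟨hrNE, hr2⟩⟩
  · rintro s ⟨hs0, hsc⟩
    by_contra hlt
    push_neg at hlt
    -- the set A of points of S in the square of side s
    set A := S.filter (fun q => q ∈ square p s) with hA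
    -- A ⊆ B
    have hAB : A ⊆ B := by
      intro q hq
      obtain ⟨hqS, hqsq⟩ := mem_filter.mp hq
      obtain ⟨hqNE, hqd⟩ := mem_square_iff.mp hqsq
      have hqv : dinf p q < v := lt_of_le_of_lt hqd hlt
      have hqU : q ∈ L₁ ∪ L₂ := by
        by_contra hqU
        rw [Finset.mem_union] at hqU
        push_neg at hqU
        -- q is in one of the two cones
        rcases le_total (q.1 - p.1) (q.2 - p.2) with hcone | hcone
        · -- NNE case
          have hqN : q ∈ S.filter (NNEpred p) := mem_filter.mpr ⟨hqS, hqNE, hcone⟩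
          have hk : ∀ a ∈ S.filter (NNEpred p), ∀ b ∈ S.filter (NNEpred p),
              a ≠ b → a.2 ≠ b.2 := fun a ha b hb hab =>
            hgeny a (mem_filter.mp ha).1 b (mem_filter.mp hb).1 hab
          obtain ⟨hLc, hLlt⟩ := cone_case (S.filter (NNEpred p)) (fun r => r.2)
            hk c L₁ hL₁ q hqN hqU.1
          -- every point of L₁ is in B, and q₀ ∉ L₁
          have hL₁B : L₁ ⊆ B := by
            intro r hr
            have hrd : dinf p r < v := by
              have hrN : NNEpred p r := (mem_filter.mp (hL₁ ▸ hr :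
                r ∈ (S.filter (NNEpred p)).filter _)).1 |> mem_filter.mp |>.2
              rw [dinf_of_NNE hrN]
              have := hLlt r hr
              have hq2 : dinf p q = q.2 - p.2 := dinf_of_NNE ⟨hqNE, hcone⟩
              linarith [hq2 ▸ hqv]
            exact mem_filter.mpr ⟨Finset.mem_union_left _ hr, le_of_lt hrd⟩
          have hq₀L₁ : q₀ ∉ L₁ := by
            intro h
            have := mem_filter.mp (hL₁B h)
            have hq₀d : dinf p q₀ < v := by
              have hrN : NNEpred p q₀ := (mem_filter.mp (hL₁ ▸ h :
                q₀ ∈ (S.filter (NNEpred p)).filter _)).1 |> mem_filter.mp |>.2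
              rw [dinf_of_NNE hrN]
              have := hLlt q₀ h
              have hq2 : dinf p q = q.2 - p.2 := dinf_of_NNE ⟨hqNE, hcone⟩
              linarith [hq2 ▸ hqv]
            exact absurd hq₀v (ne_of_lt hq₀d)
          have : c + 1 ≤ B.card := by
            calc c + 1 ≤ L₁.card + 1 := by omega
              _ = (insert q₀ L₁).card := (card_insert_of_notMem hq₀L₁).symm
              _ ≤ B.card := card_le_card (by
                  intro x hx
                  rcases mem_insert.mp hx with rfl | hx
                  · exact hq₀B
                  · exact hL₁B hx)
          omega
        · -- ENE case
          have hqN : q ∈ S.filter (ENEpred p) := mem_filter.mpr ⟨hqS, hqNE, hcone⟩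
          have hk : ∀ a ∈ S.filter (ENEpred p), ∀ b ∈ S.filter (ENEpred p),
              a ≠ b → a.1 ≠ b.1 := fun a ha b hb hab =>
            hgenx a (mem_filter.mp ha).1 b (mem_filter.mp hb).1 hab
          obtain ⟨hLc, hLlt⟩ := cone_case (S.filter (ENEpred p)) (fun r => r.1)
            hk c L₂ hL₂ q hqN hqU.2
          have hL₂B : L₂ ⊆ B := by
            intro r hr
            have hrd : dinf p r < v := by
              have hrN : ENEpred p r := (mem_filter.mp (hL₂ ▸ hr :
                r ∈ (S.filter (ENEpred p)).filter _)).1 |> mem_filter.mp |>.2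
              rw [dinf_of_ENE hrN]
              have := hLlt r hr
              have hq2 : dinf p q = q.1 - p.1 := dinf_of_ENE ⟨hqNE, hcone⟩
              linarith [hq2 ▸ hqv]
            exact mem_filter.mpr ⟨Finset.mem_union_right _ hr, le_of_lt hrd⟩
          have hq₀L₂ : q₀ ∉ L₂ := by
            intro h
            have hq₀d : dinf p q₀ < v := by
              have hrN : ENEpred p q₀ := (mem_filter.mp (hL₂ ▸ h :
                q₀ ∈ (S.filter (ENEpred p)).filter _)).1 |> mem_filter.mp |>.2
              rw [dinf_of_ENE hrN]
              have := hLlt q₀ h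
              have hq2 : dinf p q = q.1 - p.1 := dinf_of_ENE ⟨hqNE, hcone⟩
              linarith [hq2 ▸ hqv]
            exact absurd hq₀v (ne_of_lt hq₀d)
          have : c + 1 ≤ B.card := by
            calc c + 1 ≤ L₂.card + 1 := by omega
              _ = (insert q₀ L₂).card := (card_insert_of_notMem hq₀L₂).symm
              _ ≤ B.card := card_le_card (by
                  intro x hx
                  rcases mem_insert.mp hx with rfl | hx
                  · exact hq₀B
                  · exact hL₂B hx)
          omega
      exact mem_filter.mpr ⟨hqU, le_of_lt hqv⟩
    -- but q₀ ∈ B \ A, contradiction with |A| ≥ c = |B|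
    have hq₀A : q₀ ∉ A := by
      intro h
      obtain ⟨_, hsq⟩ := mem_filter.mp h
      have := (mem_square_iff.mp hsq).2
      rw [hq₀v] at this
      exact absurd hlt (not_lt.mpr this)
    have : A ⊆ B.erase q₀ := fun x hx =>
      Finset.mem_erase.mpr ⟨fun h => hq₀A (h ▸ hx), hAB hx⟩
    have := card_le_card this
    rw [Finset.card_erase_of_mem hq₀B, hvc] at this
    omega
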